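/- In the setup below, for every arrival order π, the expected reward of the gambler over the randomness of the coin flips is at least one half of the expected value of max_i X_i over the randomness of the coin flips. -/
import Mathlib


/-- Maximum of a function on `Fin n`, for `n > 0`. -/
noncomputable def finMax {n : ℕ} (hn : 0 < n) (f : Fin n → ℝ) : ℝ :=
  Finset.univ.sup' (Finset.univ_nonempty_iff.mpr (Fin.pos_iff_nonempty.mp hn)) f

/-- The gambler's reward when the values `X` arrive in the order given by the
permutation `π` and the gambler accepts the first arriving value strictly
exceeding the threshold `max_i X̃ i` (reward `0` if no value does). -/
noncomputable def gamblerReward {n : ℕ} (hn : 0 < n) (π : Equiv.Perm (Fin n))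
    (X Xt : Fin n → ℝ) : ℝ :=
  if h : (Finset.univ.filter (fun k => finMax hn Xt < X (π k))).Nonempty then
    X (π ((Finset.univ.filter (fun k => finMax hn Xt < X (π k))).min' h))
  else 0


lemma card_pattern {n : ℕ} (S : Finset (Fin n)) (b : Fin n → Bool) :
    (Finset.univ.filter (fun C : Fin n → Bool => ∀ a ∈ S, C a = b a)).card
      = 2 ^ (n - S.card) := by
  classical
  have e : {C : Fin n → Bool // ∀ a ∈ S, C a = b a} ≃ ({a : Fin n // a ∉ S} → Bool) :=
    { toFun := fun C a => C.1 a.1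
      invFun := fun f => ⟨fun a => if h : a ∈ S then b a else f ⟨a, h⟩,
        fun a ha => by simp [ha]⟩
      left_inv := fun C => by
        apply Subtype.ext
        funext a
        by_cases h : a ∈ S
        · simp [h, C.2 a h]
        · simp [h]
      right_inv := fun f => by
        funext a
        simp [a.2] }
  have h1 : (Finset.univ.filter (fun C : Fin n → Bool => ∀ a ∈ S, C a = b a)).card
      = Fintype.card {C : Fin n → Bool // ∀ a ∈ S, C a = b a} :=
    (Fintype.card_subtype _).symm
  rw [h1, Fintype.card_congr e, Fintype.card_fun]
  have h2 : Fintype.card {a : Fin n // a ∉ S} = n - S.card := by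
    have := Fintype.card_subtype_compl (fun a : Fin n => a ∈ S)
    simpa using this
  rw [h2]
  simp

lemma tele (g : ℕ → ℝ) : ∀ K k, k ≤ K →
    ∑ j ∈ Finset.Icc k K, (g j - g (j + 1)) = g k - g (K + 1) := by
  intro K
  induction K with
  | zero =>
    intro k hk
    interval_cases k
    simp
  | succ K ih =>
    intro k hk
    rcases Nat.lt_or_ge k (K + 1) with h | h
    · rw [Finset.sum_Icc_succ_top (by omega), ih k (by omega)]
      ring
    · have : k = K + 1 := by omega
      subst this
      simp

lemma le_finMax {n : ℕ} (hn : 0 < n) (f : Fin n → ℝ) (i : Fin n) : f i ≤ finMax hn f := by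
  unfold finMax
  exact Finset.le_sup' f (Finset.mem_univ i)

lemma finMax_lt_iff {n : ℕ} (hn : 0 < n) (f : Fin n → ℝ) (a : ℝ) :
    finMax hn f < a ↔ ∀ i, f i < a := by
  unfold finMax
  rw [Finset.sup'_lt_iff]
  simp

lemma exists_eq_finMax {n : ℕ} (hn : 0 < n) (f : Fin n → ℝ) : ∃ i, finMax hn f = f i := by
  unfold finMax
  obtain ⟨i, _, h⟩ := Finset.exists_mem_eq_sup' (Finset.univ_nonempty_iff.mpr (Fin.pos_iff_nonempty.mp hn)) f
  exact ⟨i, h⟩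

lemma gamblerReward_pos {n : ℕ} (hn : 0 < n) (π : Equiv.Perm (Fin n))
    (X Xt : Fin n → ℝ) (i : Fin n) (hi : finMax hn Xt < X i) :
    finMax hn Xt < gamblerReward hn π X Xt ∧ ∃ i', gamblerReward hn π X Xt = X i' := by
  classical
  have hne : (Finset.univ.filter (fun k => finMax hn Xt < X (π k))).Nonempty :=
    ⟨π.symm i, Finset.mem_filter.2 ⟨Finset.mem_univ _, by simpa using hi⟩⟩
  rw [gamblerReward, dif_pos hne]
  have hm := Finset.min'_mem _ hne
  rw [Finset.mem_filter] at hm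
  exact ⟨hm.2, _, rfl⟩

lemma gamblerReward_nonneg' {n : ℕ} (hn : 0 < n) (π : Equiv.Perm (Fin n))
    (X Xt : Fin n → ℝ) (h0 : 0 ≤ finMax hn Xt) : 0 ≤ gamblerReward hn π X Xt := by
  classical
  rw [gamblerReward]
  split
  · next h =>
    have hm := Finset.min'_mem _ h
    rw [Finset.mem_filter] at hm
    exact le_of_lt (lt_of_le_of_lt h0 hm.2)
  · exact le_rfl


/-- **Pointwise half-prophet guarantee (Theorem 3.1, fixed values).** In the
setup of the single-sample analysis (fixed distinct values `Y i > Z i ≥ 0`),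
for every arrival order `π`, the expected reward of the gambler over the `n`
independent fair coin flips `C` (with `X i = Y i`, `X̃ i = Z i` if `C i` is
heads and `X i = Z i`, `X̃ i = Y i` otherwise, the gambler accepting the first
arriving `X` value exceeding `max_i X̃ i`) is at least half of the expected
value of `max_i X i` over the coin flips. -/
theorem gambler_half_of_prophet
    -- the `2n` values: `Y i > Z i ≥ 0` for each pair `i`, all distinct
    (n : ℕ) (hn : 0 < n) (Y Z : Fin n → ℝ)
    (hZnonneg : ∀ i, 0 ≤ Z i) (hYZ : ∀ i, Z i < Y i)
    (hdistinct : Function.Injective (Sum.elim Y Z))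
    -- `W 1 > W 2 > … > W (2n)` is the decreasing relabeling of the `2n` values
    (W : ℕ → ℝ) (hWanti : StrictAntiOn W (Set.Icc 1 (2 * n)))
    (hWrange : (Finset.Icc 1 (2 * n)).image W
      = Finset.univ.image Y ∪ Finset.univ.image Z)
    -- `ι j` is the index of the pair containing `W j`
    (ι : ℕ → Fin n)
    (hι : ∀ j ∈ Finset.Icc 1 (2 * n), W j = Y (ι j) ∨ W j = Z (ι j))
    -- `jstar` is the pivotal index: the least `j` whose pair index repeats an earlier one
    (jstar : ℕ)
    (hjstar : IsLeast {j : ℕ | j ∈ Finset.Icc 1 (2 * n)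
      ∧ ∃ ℓ, 1 ≤ ℓ ∧ ℓ < j ∧ ι ℓ = ι j} jstar)
    (π : Equiv.Perm (Fin n)) :
    (1 / 2 : ℝ) *
        ((∑ C : Fin n → Bool,
          finMax hn (fun i => if C i then Y i else Z i)) / 2 ^ n)
      ≤ (∑ C : Fin n → Bool,
          gamblerReward hn π (fun i => if C i then Y i else Z i)
            (fun i => if C i then Z i else Y i)) / 2 ^ n := by
  classical
  obtain ⟨hjmem, hleast⟩ := hjstar
  obtain ⟨hjIcc, ℓ₀, hℓ1, hℓlt, hℓι⟩ := hjmem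
  rw [Finset.mem_Icc] at hjIcc
  obtain ⟨hj1, hj2n⟩ := hjIcc
  have hj2 : 2 ≤ jstar := by omega
  have hYinj : Function.Injective Y := by
    intro a b h
    have := hdistinct (a₁ := Sum.inl a) (a₂ := Sum.inl b) h
    simpa using this
  have hYZ' : ∀ a b, Y a ≠ Z b := by
    intro a b h
    have := hdistinct (a₁ := Sum.inl a) (a₂ := Sum.inr b) h
    simp at this
  have hanti_lt : ∀ k l, 1 ≤ k → k < l → l ≤ 2 * n → W l < W k := by
    intro k l h1 h2 h3
    exact hWanti ⟨h1, by omega⟩ ⟨by omega, h3⟩ h2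
  have hanti_le : ∀ k l, 1 ≤ k → k ≤ l → l ≤ 2 * n → W l ≤ W k := by
    intro k l h1 h2 h3
    rcases eq_or_lt_of_le h2 with h | h
    · rw [h]
    · exact (hanti_lt k l h1 h h3).le
  have hle_rev : ∀ k l, 1 ≤ k → 1 ≤ l → k ≤ 2 * n → l ≤ 2 * n → W k ≤ W l → l ≤ k := by
    intro k l hk1 hl1 hk2 hl2 hle
    by_contra h
    push_neg at h
    exact absurd hle (not_le.2 (hanti_lt k l hk1 h hl2))
  have hvalY : ∀ i, ∃ k, 1 ≤ k ∧ k ≤ 2 * n ∧ W k = Y i := by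
    intro i
    have : Y i ∈ (Finset.Icc 1 (2 * n)).image W := by
      rw [hWrange]
      exact Finset.mem_union_left _ (Finset.mem_image_of_mem Y (Finset.mem_univ i))
    obtain ⟨k, hk, hWk⟩ := Finset.mem_image.1 this
    rw [Finset.mem_Icc] at hk
    exact ⟨k, hk.1, hk.2, hWk⟩
  have hvalZ : ∀ i, ∃ k, 1 ≤ k ∧ k ≤ 2 * n ∧ W k = Z i := by
    intro i
    have : Z i ∈ (Finset.Icc 1 (2 * n)).image W := by
      rw [hWrange]
      exact Finset.mem_union_right _ (Finset.mem_image_of_mem Z (Finset.mem_univ i))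
    obtain ⟨k, hk, hWk⟩ := Finset.mem_image.1 this
    rw [Finset.mem_Icc] at hk
    exact ⟨k, hk.1, hk.2, hWk⟩
  have hWY : ∀ k, 1 ≤ k → k < jstar → W k = Y (ι k) := by
    intro k hk1 hklt
    have hk2n : k ≤ 2 * n := by omega
    rcases hι k (Finset.mem_Icc.2 ⟨hk1, hk2n⟩) with h | h
    · exact h
    · exfalso
      obtain ⟨k', hk'1, hk'2n, hWk'⟩ := hvalY (ι k)
      have hlt : W k < W k' := by
        rw [h, hWk']; exact hYZ (ι k)
      have hk'k : k' < k := by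
        by_contra hc
        push_neg at hc
        exact absurd hlt (not_lt.2 (hanti_le k k' hk1 hc hk'2n))
      rcases hι k' (Finset.mem_Icc.2 ⟨hk'1, hk'2n⟩) with h' | h'
      · have hii : ι k' = ι k := hYinj (by rw [← h', hWk'])
        have : jstar ≤ k := hleast ⟨Finset.mem_Icc.2 ⟨hk1, hk2n⟩, k', hk'1, hk'k, hii⟩
        omega
      · exact hYZ' (ι k) (ι k') (by rw [← hWk', h'])
  have hιinj : ∀ k l, 1 ≤ k → k < l → l < jstar → ι k ≠ ι l := by
    intro k l hk1 hkl hl h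
    have : jstar ≤ l := hleast ⟨Finset.mem_Icc.2 ⟨by omega, by omega⟩, k, hk1, hkl, h⟩
    omega
  have hWZj : W jstar = Z (ι jstar) := by
    rcases hι jstar (Finset.mem_Icc.2 ⟨hj1, hj2n⟩) with h | h
    · exfalso
      have h1 : W ℓ₀ = Y (ι ℓ₀) := hWY ℓ₀ hℓ1 hℓlt
      have heq : W ℓ₀ = W jstar := by rw [h1, hℓι, ← h]
      have hlt := hanti_lt ℓ₀ jstar hℓ1 hℓlt hj2n
      linarith
    · exact h
  have hZle : ∀ i, Z i ≤ W jstar := by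
    intro i
    obtain ⟨k, hk1, hk2n, hWk⟩ := hvalZ i
    rcases Nat.lt_or_ge k jstar with h | h
    · exfalso
      exact hYZ' (ι k) i (by rw [← hWY k hk1 h, hWk])
    · rw [← hWk]
      exact hanti_le jstar k hj1 h hk2n
  have hW0 : 0 ≤ W jstar := by rw [hWZj]; exact hZnonneg _
  have hScard : ∀ j, j < jstar → ((Finset.Icc 1 j).image ι).card = j := by
    intro j hj
    have hinj : Set.InjOn ι (Finset.Icc 1 j : Finset ℕ) := by
      intro a ha b hb hab
      rw [Finset.mem_coe, Finset.mem_Icc] at ha hb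
      by_contra hne
      rcases lt_trichotomy a b with h | h | h
      · exact hιinj a b ha.1 h (by omega) hab
      · exact hne h
      · exact hιinj b a hb.1 h (by omega) hab.symm
    rw [Finset.card_image_of_injOn hinj, Nat.card_Icc]
    omega
  have hjn : jstar - 1 ≤ n := by
    have h1 := hScard (jstar - 1) (by omega)
    have h2 := Finset.card_le_univ ((Finset.Icc 1 (jstar - 1)).image ι)
    rw [h1] at h2
    simpa using h2
  -- gambler-side facts
  have hTj : ∀ C : Fin n → Bool, W jstar ≤ finMax hn (fun i => if C i then Z i else Y i) := by
    intro C
    refine le_trans ?_ (le_finMax hn _ (ι jstar))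
    by_cases hC : C (ι jstar) = true
    · rw [if_pos hC, ← hWZj]
    · rw [if_neg hC]
      have hYp : W ℓ₀ = Y (ι jstar) := by rw [hWY ℓ₀ hℓ1 hℓlt, hℓι]
      rw [← hYp]
      exact (hanti_lt ℓ₀ jstar hℓ1 hℓlt hj2n).le
  have hMj : ∀ C : Fin n → Bool, W jstar ≤ finMax hn (fun i => if C i then Y i else Z i) := by
    intro C
    refine le_trans ?_ (le_finMax hn _ (ι jstar))
    by_cases hC : C (ι jstar) = true
    · rw [if_pos hC]
      have hYp : W ℓ₀ = Y (ι jstar) := by rw [hWY ℓ₀ hℓ1 hℓlt, hℓι]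
      rw [← hYp]
      exact (hanti_lt ℓ₀ jstar hℓ1 hℓlt hj2n).le
    · rw [if_neg hC, ← hWZj]
  have hT1 : ∀ C : Fin n → Bool, C (ι 1) = true →
      finMax hn (fun i => if C i then Z i else Y i) < W 1 := by
    intro C hC
    rw [finMax_lt_iff]
    intro i
    by_cases h : C i = true
    · rw [if_pos h]
      exact lt_of_le_of_lt (hZle i) (hanti_lt 1 jstar le_rfl (by omega) hj2n)
    · rw [if_neg h]
      obtain ⟨k, hk1, hk2n, hWk⟩ := hvalY i
      rcases eq_or_lt_of_le hk1 with h1 | h1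
      · exfalso
        have hii : ι 1 = i := hYinj (by rw [← hWY 1 le_rfl (by omega), h1, hWk])
        rw [hii] at hC
        exact h hC
      · rw [← hWk]
        exact hanti_lt 1 k le_rfl h1 hk2n
  have haccept : ∀ C : Fin n → Bool, C (ι 1) = true →
      finMax hn (fun i => if C i then Z i else Y i) <
        gamblerReward hn π (fun i => if C i then Y i else Z i)
          (fun i => if C i then Z i else Y i) ∧
      ∃ i', gamblerReward hn π (fun i => if C i then Y i else Z i)
          (fun i => if C i then Z i else Y i) = (if C i' then Y i' else Z i') := by
    intro C hC
    have hx : finMax hn (fun i => if C i then Z i else Y i) <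
        (fun i => if C i then Y i else Z i) (ι 1) := by
      simp only [if_pos hC]
      rw [← hWY 1 le_rfl (by omega)]
      exact hT1 C hC
    exact gamblerReward_pos hn π _ _ (ι 1) hx
  have hA0 : ∀ C : Fin n → Bool,
      0 ≤ gamblerReward hn π (fun i => if C i then Y i else Z i)
        (fun i => if C i then Z i else Y i) :=
    fun C => gamblerReward_nonneg' hn π _ _ (le_trans hW0 (hTj C))
  have hMk : ∀ C : Fin n → Bool, ∃ k, 1 ≤ k ∧ k ≤ jstar ∧
      finMax hn (fun i => if C i then Y i else Z i) = W k := by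
    intro C
    obtain ⟨i₀, hi₀⟩ := exists_eq_finMax hn (fun i => if C i then Y i else Z i)
    have hval : ∃ k, 1 ≤ k ∧ k ≤ 2 * n ∧ W k = (if C i₀ = true then Y i₀ else Z i₀) := by
      by_cases h : C i₀ = true
      · simpa [h] using hvalY i₀
      · simpa [h] using hvalZ i₀
    obtain ⟨k, hk1, hk2n, hWk⟩ := hval
    refine ⟨k, hk1, ?_, by rw [hi₀, ← hWk]⟩
    have hge : W jstar ≤ W k := by
      rw [hWk]
      have := hMj C
      rw [hi₀] at this
      exact this
    exact hle_rev jstar k hj1 hk1 hj2n hk2n hge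
  -- layer-cake machinery
  set V : ℕ → ℝ := fun j => if j ≤ jstar then W j else 0 with hV
  clear_value V
  have hVj : ∀ j, j ≤ jstar → V j = W j := by
    intro j h
    rw [hV]
    simp [h]
  have hVtop : V (jstar + 1) = 0 := by
    rw [hV]
    simp
  have hcnonneg : ∀ j, 1 ≤ j → j ≤ jstar → 0 ≤ V j - V (j + 1) := by
    intro j h1 h2
    rcases eq_or_lt_of_le h2 with heq | hlt
    · rw [heq, hVtop, hVj jstar le_rfl, sub_zero]
      exact hW0
    · rw [hVj j (by omega), hVj (j + 1) (by omega)]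
      have := hanti_le j (j + 1) h1 (by omega) (by omega)
      linarith
  have htel : ∀ k, 1 ≤ k → k ≤ jstar →
      ∑ j ∈ Finset.Icc k jstar, (V j - V (j + 1)) = W k := by
    intro k h1 h2
    rw [tele V jstar k h2, hVtop, hVj k h2, sub_zero]
  have hlayer_le : ∀ x : ℝ, 0 ≤ x →
      ∑ j ∈ Finset.Icc 1 jstar, (V j - V (j + 1)) * (if W j ≤ x then (1 : ℝ) else 0) ≤ x := by
    intro x hx
    by_cases hne : ((Finset.Icc 1 jstar).filter (fun k => W k ≤ x)).Nonempty
    · obtain ⟨hk₀mem', hk₀min⟩ : ((Finset.Icc 1 jstar).filter (fun k => W k ≤ x)).min' hne ∈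
          (Finset.Icc 1 jstar).filter (fun k => W k ≤ x) ∧
          ∀ k ∈ (Finset.Icc 1 jstar).filter (fun k => W k ≤ x),
            ((Finset.Icc 1 jstar).filter (fun k => W k ≤ x)).min' hne ≤ k :=
        ⟨Finset.min'_mem _ hne, fun k hk => Finset.min'_le _ k hk⟩
      set k₀ := ((Finset.Icc 1 jstar).filter (fun k => W k ≤ x)).min' hne with hk₀
      rw [Finset.mem_filter, Finset.mem_Icc] at hk₀mem'
      have hfeq : (Finset.Icc 1 jstar).filter (fun j => W j ≤ x) = Finset.Icc k₀ jstar := by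
        ext j
        rw [Finset.mem_filter, Finset.mem_Icc, Finset.mem_Icc]
        constructor
        · rintro ⟨⟨hja, hjb⟩, hjx⟩
          exact ⟨hk₀min j (Finset.mem_filter.2 ⟨Finset.mem_Icc.2 ⟨hja, hjb⟩, hjx⟩), hjb⟩
        · rintro ⟨hja, hjb⟩
          refine ⟨⟨by omega, hjb⟩, ?_⟩
          exact le_trans (hanti_le k₀ j hk₀mem'.1.1 hja (by omega)) hk₀mem'.2
      calc ∑ j ∈ Finset.Icc 1 jstar, (V j - V (j + 1)) * (if W j ≤ x then (1 : ℝ) else 0)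
          = ∑ j ∈ Finset.Icc 1 jstar, (if W j ≤ x then V j - V (j + 1) else 0) := by
            refine Finset.sum_congr rfl ?_
            intro j _
            rw [mul_ite, mul_one, mul_zero]
        _ = ∑ j ∈ (Finset.Icc 1 jstar).filter (fun j => W j ≤ x), (V j - V (j + 1)) :=
            (Finset.sum_filter _ _).symm
        _ = ∑ j ∈ Finset.Icc k₀ jstar, (V j - V (j + 1)) := by rw [hfeq]
        _ = W k₀ := htel k₀ hk₀mem'.1.1 hk₀mem'.1.2
        _ ≤ x := hk₀mem'.2
    · have hz : ∀ j ∈ Finset.Icc 1 jstar,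
          (V j - V (j + 1)) * (if W j ≤ x then (1 : ℝ) else 0) = 0 := by
        intro j hj
        rw [if_neg, mul_zero]
        intro hc
        exact hne ⟨j, Finset.mem_filter.2 ⟨hj, hc⟩⟩
      rw [Finset.sum_congr rfl hz, Finset.sum_const_zero]
      exact hx
  have hlayer_eq : ∀ k, 1 ≤ k → k ≤ jstar →
      ∑ j ∈ Finset.Icc 1 jstar, (V j - V (j + 1)) * (if W j ≤ W k then (1 : ℝ) else 0) = W k := by
    intro k hk1 hk2
    have hfeq : (Finset.Icc 1 jstar).filter (fun j => W j ≤ W k) = Finset.Icc k jstar := by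
      ext j
      rw [Finset.mem_filter, Finset.mem_Icc, Finset.mem_Icc]
      constructor
      · rintro ⟨⟨hja, hjb⟩, hjk⟩
        exact ⟨hle_rev j k hja hk1 (by omega) (by omega) hjk, hjb⟩
      · rintro ⟨hja, hjb⟩
        exact ⟨⟨by omega, hjb⟩, hanti_le k j hk1 hja (by omega)⟩
    calc ∑ j ∈ Finset.Icc 1 jstar, (V j - V (j + 1)) * (if W j ≤ W k then (1 : ℝ) else 0)
        = ∑ j ∈ Finset.Icc 1 jstar, (if W j ≤ W k then V j - V (j + 1) else 0) := by
          refine Finset.sum_congr rfl ?_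
          intro j _
          rw [mul_ite, mul_one, mul_zero]
      _ = ∑ j ∈ (Finset.Icc 1 jstar).filter (fun j => W j ≤ W k), (V j - V (j + 1)) :=
          (Finset.sum_filter _ _).symm
      _ = ∑ j ∈ Finset.Icc k jstar, (V j - V (j + 1)) := by rw [hfeq]
      _ = W k := htel k hk1 hk2
  have hcardfun : Fintype.card (Fin n → Bool) = 2 ^ n := by
    simp
  have hkey : ∀ j, 1 ≤ j → j ≤ jstar →
      ((Finset.univ.filter (fun C : Fin n → Bool =>
          W j ≤ finMax hn (fun i => if C i then Y i else Z i))).card : ℝ)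
        ≤ 2 * ((Finset.univ.filter (fun C : Fin n → Bool =>
          W j ≤ gamblerReward hn π (fun i => if C i then Y i else Z i)
            (fun i => if C i then Z i else Y i))).card : ℝ) := by
    intro j hjone hjle
    set EM := Finset.univ.filter (fun C : Fin n → Bool =>
        W j ≤ finMax hn (fun i => if C i then Y i else Z i)) with hEM
    set EA := Finset.univ.filter (fun C : Fin n → Bool =>
        W j ≤ gamblerReward hn π (fun i => if C i then Y i else Z i)
          (fun i => if C i then Z i else Y i)) with hEA
    clear_value EM EA
    suffices h : EM.card ≤ 2 * EA.card by exact_mod_cast h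
    rcases eq_or_lt_of_le hjle with hjeq | hjlt
    · -- j = jstar
      have hsub : Finset.univ.filter
          (fun C : Fin n → Bool => ∀ a ∈ ({ι 1} : Finset (Fin n)), C a = (fun _ => true) a)
            ⊆ EA := by
        intro C hC
        rw [Finset.mem_filter] at hC
        have hC1 : C (ι 1) = true := hC.2 (ι 1) (Finset.mem_singleton_self _)
        obtain ⟨hgt, -⟩ := haccept C hC1
        rw [hEA, Finset.mem_filter]
        refine ⟨Finset.mem_univ _, ?_⟩
        rw [hjeq]
        exact le_of_lt (lt_of_le_of_lt (hTj C) hgt)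
      have hc1 := card_pattern ({ι 1} : Finset (Fin n)) (fun _ => true)
      rw [Finset.card_singleton] at hc1
      have hcle := Finset.card_le_card hsub
      rw [hc1] at hcle
      clear hc1
      have hEMle : EM.card ≤ 2 ^ n := by
        rw [hEM]
        refine le_trans (Finset.card_filter_le _ _) ?_
        rw [Finset.card_univ, hcardfun]
      have hpow : 2 ^ n ≤ 2 * 2 ^ (n - 1) := by
        calc (2 : ℕ) ^ n ≤ 2 ^ ((n - 1) + 1) := Nat.pow_le_pow_right (by norm_num) (by omega)
          _ = 2 * 2 ^ (n - 1) := by rw [pow_succ]; ring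
      omega
    · -- j < jstar
      set Sj := (Finset.Icc 1 j).image ι with hSj
      have hSjcard : Sj.card = j := hScard j hjlt
      have hι1Sj : ι 1 ∈ Sj := Finset.mem_image_of_mem ι (Finset.mem_Icc.2 ⟨le_rfl, hjone⟩)
      set F1 := Finset.univ.filter (fun C : Fin n → Bool =>
          ∀ a ∈ ({ι 1} : Finset (Fin n)), C a = (fun _ => true) a) with hF1
      clear_value F1
      set Fall := Finset.univ.filter (fun C : Fin n → Bool =>
          ∀ a ∈ Sj, C a = (fun _ => true) a) with hFall
      clear_value Fall
      set Fnone := Finset.univ.filter (fun C : Fin n → Bool =>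
          ∀ a ∈ Sj, C a = (fun _ => false) a) with hFnone
      clear_value Fnone
      have hEMsub : EM ⊆ Finset.univ \ Fnone := by
        intro C hC
        rw [hEM, Finset.mem_filter] at hC
        rw [Finset.mem_sdiff, hFnone, Finset.mem_filter]
        refine ⟨Finset.mem_univ _, ?_⟩
        rintro ⟨-, hall⟩
        obtain ⟨i₀, hi₀⟩ := exists_eq_finMax hn (fun i => if C i then Y i else Z i)
        have hXi₀ : W j ≤ (if C i₀ = true then Y i₀ else Z i₀) := by
          rw [← hi₀]; exact hC.2
        have hCi₀ : C i₀ = true := by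
          by_contra h
          rw [if_neg h] at hXi₀
          have := lt_of_le_of_lt (hZle i₀) (hanti_lt j jstar hjone hjlt hj2n)
          linarith
        rw [if_pos hCi₀] at hXi₀
        obtain ⟨k, hk1, hk2n, hWk⟩ := hvalY i₀
        have hkj : k ≤ j := hle_rev j k hjone hk1 (by omega) hk2n (by rw [hWk]; exact hXi₀)
        have hik : ι k = i₀ := hYinj (by rw [← hWY k hk1 (by omega), hWk])
        have hmem : i₀ ∈ Sj := by
          rw [← hik]
          exact Finset.mem_image_of_mem ι (Finset.mem_Icc.2 ⟨hk1, hkj⟩)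
        have := hall i₀ hmem
        simp [hCi₀] at this
      have hE1sub : F1 \ Fall ⊆ EA := by
        intro C hC
        rw [Finset.mem_sdiff, hF1, Finset.mem_filter] at hC
        obtain ⟨⟨-, h1⟩, h2⟩ := hC
        have hC1 : C (ι 1) = true := h1 (ι 1) (Finset.mem_singleton_self _)
        have h2' : ¬ ∀ a ∈ Sj, C a = (fun _ => true) a := by
          intro h
          exact h2 (by rw [hFall, Finset.mem_filter]; exact ⟨Finset.mem_univ _, h⟩)
        push_neg at h2'
        obtain ⟨a, haS, haf⟩ := h2'
        obtain ⟨k, hkIcc, hka⟩ := Finset.mem_image.1 haS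
        rw [Finset.mem_Icc] at hkIcc
        have hCk : C (ι k) = false := by
          rw [hka]
          simpa using haf
        have hTk : W k ≤ finMax hn (fun i => if C i then Z i else Y i) := by
          refine le_trans ?_ (le_finMax hn _ (ι k))
          rw [if_neg (by simp [hCk])]
          exact le_of_eq (hWY k hkIcc.1 (by omega))
        obtain ⟨hgt, -⟩ := haccept C hC1
        rw [hEA, Finset.mem_filter]
        refine ⟨Finset.mem_univ _, ?_⟩
        have hWjk : W j ≤ W k := hanti_le k j hkIcc.1 hkIcc.2 (by omega)
        linarith
      obtain ⟨E2, hE2head, hE2T, hE2all, hE2card⟩ :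
          ∃ E2 : Finset (Fin n → Bool),
            (∀ C ∈ E2, C (ι 1) = true) ∧
            (∀ C ∈ E2, W (j + 1) ≤ finMax hn (fun i => if C i then Z i else Y i)) ∧
            (∀ C ∈ E2, ∀ a ∈ Sj, C a = (fun _ => true) a) ∧
            2 ^ (n - (j + 1)) ≤ E2.card := by
        rcases eq_or_lt_of_le (show j + 1 ≤ jstar by omega) with hj1eq | hj1lt
        · refine ⟨Fall, ?_, ?_, ?_, ?_⟩
          · intro C hC
            rw [hFall, Finset.mem_filter] at hC
            simpa using hC.2 (ι 1) hι1Sj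
          · intro C hC
            rw [hj1eq]
            exact hTj C
          · intro C hC
            rw [hFall, Finset.mem_filter] at hC
            exact hC.2
          · rw [hFall, card_pattern, hSjcard]
            exact Nat.pow_le_pow_right (by norm_num) (by omega)
        · set Sj1 := (Finset.Icc 1 (j + 1)).image ι with hSj1
          set bb : Fin n → Bool := fun a => if a = ι (j + 1) then false else true with hbb
          have hin : ∀ C : Fin n → Bool, (∀ a ∈ Sj1, C a = bb a) →
              (∀ k, 1 ≤ k → k ≤ j → C (ι k) = true) ∧ C (ι (j + 1)) = false := by
            intro C hC
            constructor
            · intro k h1 h2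
              have hmem : ι k ∈ Sj1 :=
                Finset.mem_image_of_mem ι (Finset.mem_Icc.2 ⟨h1, by omega⟩)
              rw [hC (ι k) hmem, hbb]
              simp only []
              rw [if_neg (hιinj k (j + 1) h1 (by omega) hj1lt)]
            · have hmem : ι (j + 1) ∈ Sj1 :=
                Finset.mem_image_of_mem ι (Finset.mem_Icc.2 ⟨by omega, le_rfl⟩)
              rw [hC (ι (j + 1)) hmem, hbb]
              simp
          refine ⟨Finset.univ.filter (fun C : Fin n → Bool => ∀ a ∈ Sj1, C a = bb a),
            ?_, ?_, ?_, ?_⟩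
          · intro C hC
            rw [Finset.mem_filter] at hC
            exact (hin C hC.2).1 1 le_rfl hjone
          · intro C hC
            rw [Finset.mem_filter] at hC
            refine le_trans ?_ (le_finMax hn _ (ι (j + 1)))
            rw [if_neg (by simp [(hin C hC.2).2])]
            exact le_of_eq (hWY (j + 1) (by omega) hj1lt)
          · intro C hC
            rw [Finset.mem_filter] at hC
            intro a haS
            obtain ⟨k, hkIcc, hka⟩ := Finset.mem_image.1 haS
            rw [Finset.mem_Icc] at hkIcc
            rw [← hka]
            exact (hin C hC.2).1 k hkIcc.1 hkIcc.2
          · rw [card_pattern]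
            have : Sj1.card = j + 1 := hScard (j + 1) hj1lt
            rw [this]
      have hE2sub : E2 ⊆ EA := by
        intro C hC
        have hC1 := hE2head C hC
        obtain ⟨hgt, i₁, hrew⟩ := haccept C hC1
        have hvalr : ∃ k', 1 ≤ k' ∧ k' ≤ 2 * n ∧
            W k' = gamblerReward hn π (fun i => if C i then Y i else Z i)
              (fun i => if C i then Z i else Y i) := by
          rw [hrew]
          by_cases h : C i₁ = true
          · simpa [h] using hvalY i₁
          · simpa [h] using hvalZ i₁
        obtain ⟨k', h1', h2', hWk'⟩ := hvalr
        have hgt1 : W (j + 1) < W k' := by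
          rw [hWk']
          exact lt_of_le_of_lt (hE2T C hC) hgt
        have hk'lt : k' < j + 1 := by
          by_contra hcon
          push_neg at hcon
          have := hanti_le (j + 1) k' (by omega) hcon h2'
          linarith
        rw [hEA, Finset.mem_filter]
        refine ⟨Finset.mem_univ _, ?_⟩
        rw [← hWk']
        exact hanti_le k' j h1' (by omega) (by omega)
      have hdisj : Disjoint (F1 \ Fall) E2 := by
        rw [Finset.disjoint_left]
        intro C hC1 hC2
        rw [Finset.mem_sdiff] at hC1
        exact hC1.2 (by rw [hFall, Finset.mem_filter]; exact ⟨Finset.mem_univ _, hE2all C hC2⟩)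
      have hcardsum : (F1 \ Fall).card + E2.card ≤ EA.card := by
        rw [← Finset.card_union_of_disjoint hdisj]
        exact Finset.card_le_card (Finset.union_subset hE1sub hE2sub)
      have hF1card : F1.card = 2 ^ (n - 1) := by
        rw [hF1, card_pattern, Finset.card_singleton]
      have hFallcard : Fall.card = 2 ^ (n - j) := by
        rw [hFall, card_pattern, hSjcard]
      have hFnonecard : Fnone.card = 2 ^ (n - j) := by
        rw [hFnone, card_pattern, hSjcard]
      have hsub1 : Fall ⊆ F1 := by
        intro C hC
        rw [hFall, Finset.mem_filter] at hC
        rw [hF1, Finset.mem_filter]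
        refine ⟨Finset.mem_univ _, ?_⟩
        intro a ha
        rw [Finset.mem_singleton] at ha
        rw [ha]
        exact hC.2 (ι 1) hι1Sj
      have hE1card : (F1 \ Fall).card = 2 ^ (n - 1) - 2 ^ (n - j) := by
        rw [Finset.card_sdiff_of_subset hsub1, hF1card, hFallcard]
      have hEMcard : EM.card + 2 ^ (n - j) ≤ 2 ^ n := by
        have hcc := Finset.card_le_card hEMsub
        rw [Finset.card_sdiff_of_subset (Finset.subset_univ _), Finset.card_univ, hcardfun,
          hFnonecard] at hcc
        have hle : 2 ^ (n - j) ≤ 2 ^ n := Nat.pow_le_pow_right (by norm_num) (by omega)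
        omega
      have hp1 : 2 ^ n ≤ 2 * 2 ^ (n - 1) := by
        calc (2 : ℕ) ^ n ≤ 2 ^ ((n - 1) + 1) := Nat.pow_le_pow_right (by norm_num) (by omega)
          _ = 2 * 2 ^ (n - 1) := by rw [pow_succ]; ring
      have hp2 : 2 ^ (n - j) ≤ 2 * 2 ^ (n - (j + 1)) := by
        calc (2 : ℕ) ^ (n - j) ≤ 2 ^ ((n - (j + 1)) + 1) :=
            Nat.pow_le_pow_right (by norm_num) (by omega)
          _ = 2 * 2 ^ (n - (j + 1)) := by rw [pow_succ]; ring
      have hp3 : 2 ^ (n - j) ≤ 2 ^ (n - 1) := Nat.pow_le_pow_right (by norm_num) (by omega)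
      omega
  -- assemble
  have hMsum : ∑ C : Fin n → Bool, finMax hn (fun i => if C i then Y i else Z i)
      = ∑ j ∈ Finset.Icc 1 jstar, (V j - V (j + 1)) *
          ((Finset.univ.filter (fun C : Fin n → Bool =>
            W j ≤ finMax hn (fun i => if C i then Y i else Z i))).card : ℝ) := by
    calc ∑ C : Fin n → Bool, finMax hn (fun i => if C i then Y i else Z i)
        = ∑ C : Fin n → Bool, ∑ j ∈ Finset.Icc 1 jstar, (V j - V (j + 1)) *
            (if W j ≤ finMax hn (fun i => if C i then Y i else Z i) then (1 : ℝ) else 0) := by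
          refine Finset.sum_congr rfl ?_
          intro C _
          obtain ⟨k, h1, h2, heq⟩ := hMk C
          rw [heq]
          exact (hlayer_eq k h1 h2).symm
      _ = ∑ j ∈ Finset.Icc 1 jstar, ∑ C : Fin n → Bool, (V j - V (j + 1)) *
            (if W j ≤ finMax hn (fun i => if C i then Y i else Z i) then (1 : ℝ) else 0) :=
          Finset.sum_comm
      _ = ∑ j ∈ Finset.Icc 1 jstar, (V j - V (j + 1)) *
          ((Finset.univ.filter (fun C : Fin n → Bool =>
            W j ≤ finMax hn (fun i => if C i then Y i else Z i))).card : ℝ) := by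
          refine Finset.sum_congr rfl ?_
          intro j _
          rw [← Finset.mul_sum, Finset.sum_boole]
  have hAsum : ∑ j ∈ Finset.Icc 1 jstar, (V j - V (j + 1)) *
          ((Finset.univ.filter (fun C : Fin n → Bool =>
            W j ≤ gamblerReward hn π (fun i => if C i then Y i else Z i)
              (fun i => if C i then Z i else Y i))).card : ℝ)
      ≤ ∑ C : Fin n → Bool, gamblerReward hn π (fun i => if C i then Y i else Z i)
          (fun i => if C i then Z i else Y i) := by
    have hstep : ∑ j ∈ Finset.Icc 1 jstar, (V j - V (j + 1)) *
          ((Finset.univ.filter (fun C : Fin n → Bool =>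
            W j ≤ gamblerReward hn π (fun i => if C i then Y i else Z i)
              (fun i => if C i then Z i else Y i))).card : ℝ)
        = ∑ C : Fin n → Bool, ∑ j ∈ Finset.Icc 1 jstar, (V j - V (j + 1)) *
            (if W j ≤ gamblerReward hn π (fun i => if C i then Y i else Z i)
              (fun i => if C i then Z i else Y i) then (1 : ℝ) else 0) := by
      rw [Finset.sum_comm]
      refine Finset.sum_congr rfl ?_
      intro j _
      rw [← Finset.mul_sum, Finset.sum_boole]
    rw [hstep]
    refine Finset.sum_le_sum ?_
    intro C _
    exact hlayer_le _ (hA0 C)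
  have hmain : ∑ C : Fin n → Bool, finMax hn (fun i => if C i then Y i else Z i)
      ≤ 2 * ∑ C : Fin n → Bool, gamblerReward hn π (fun i => if C i then Y i else Z i)
          (fun i => if C i then Z i else Y i) := by
    calc ∑ C : Fin n → Bool, finMax hn (fun i => if C i then Y i else Z i)
        = ∑ j ∈ Finset.Icc 1 jstar, (V j - V (j + 1)) *
          ((Finset.univ.filter (fun C : Fin n → Bool =>
            W j ≤ finMax hn (fun i => if C i then Y i else Z i))).card : ℝ) := hMsum
      _ ≤ ∑ j ∈ Finset.Icc 1 jstar, (V j - V (j + 1)) *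
          (2 * ((Finset.univ.filter (fun C : Fin n → Bool =>
            W j ≤ gamblerReward hn π (fun i => if C i then Y i else Z i)
              (fun i => if C i then Z i else Y i))).card : ℝ)) := by
          refine Finset.sum_le_sum ?_
          intro j hj
          rw [Finset.mem_Icc] at hj
          exact mul_le_mul_of_nonneg_left (hkey j hj.1 hj.2) (hcnonneg j hj.1 hj.2)
      _ = 2 * ∑ j ∈ Finset.Icc 1 jstar, (V j - V (j + 1)) *
          ((Finset.univ.filter (fun C : Fin n → Bool =>
            W j ≤ gamblerReward hn π (fun i => if C i then Y i else Z i)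
              (fun i => if C i then Z i else Y i))).card : ℝ) := by
          rw [Finset.mul_sum]
          refine Finset.sum_congr rfl ?_
          intro j _
          ring
      _ ≤ 2 * ∑ C : Fin n → Bool, gamblerReward hn π (fun i => if C i then Y i else Z i)
            (fun i => if C i then Z i else Y i) := by
          have h2 : (0 : ℝ) ≤ 2 := by norm_num
          exact mul_le_mul_of_nonneg_left hAsum h2
  have h2n : (0 : ℝ) < 2 ^ n := by positivity
  have heq : (1 / 2 : ℝ) *
      ((∑ C : Fin n → Bool, finMax hn (fun i => if C i then Y i else Z i)) / 2 ^ n)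
      = ((∑ C : Fin n → Bool, finMax hn (fun i => if C i then Y i else Z i)) / 2) / 2 ^ n := by
    ring
  rw [heq]
  gcongr
  linarith
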